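/- arXiv:1811.00234 — 7 statements merged into one kernel-verified Lean document; each statement's English description precedes it below -/
import Mathlib

section
/- Proposition 1, case t_q ≥ t_0 (fleet-size bound, no charger costs): let the total cost of a routing plan f be obj f = ζev · N f + Σ_{q ∈ Q} C q · f q. If q ≠ 0, 0 ≤ λ ≤ f 0, and t q ≥ t 0, then the cost reduction achieved by detouring λ vehicles from the min-operation path 0 to path q satisfies obj f − obj f' ≤ λ · (C 0 − C q); in particular, since C 0 ≤ C q, the detour cannot reduce the total cost, i.e., obj f' ≥ obj f. -/
/-- Proposition 1, case `t q ≥ t 0` (fleet-size bound, no charger costs):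
detouring `lam` vehicles from the min-operation path `zero` to a slower path `q`
reduces the total cost `obj f = ζev * N f + Σ C q * f q` by at most `lam * (C 0 - C q)`;
in particular, since `C 0 ≤ C q`, the detour cannot reduce the total cost. -/
theorem prop1_case_slower
    {Q : Type*} [Fintype Q] [Nonempty Q] (zero : Q)
    (t C : Q → ℝ) (ht : ∀ p, 0 ≤ t p) (hC : ∀ p, 0 ≤ C p) (hCmin : ∀ p, C zero ≤ C p)
    (a : ℝ) (b : ℝ → ℝ) (T : Finset ℝ) (hT : T.Nonempty)
    (ζev : ℝ) (hζ : 0 ≤ ζev)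
    (f : Q → ℝ) (hf : ∀ p, 0 ≤ f p)
    (q : Q) (hq : q ≠ zero) (lam : ℝ) (hlam0 : 0 ≤ lam) (hlam : lam ≤ f zero)
    (f' : Q → ℝ) (hf'0 : f' zero = f zero - lam) (hf'q : f' q = f q + lam)
    (hf'p : ∀ p, p ≠ zero → p ≠ q → f' p = f p)
    (drive : (Q → ℝ) → ℝ → ℝ)
    (hdrive : ∀ g τ, drive g τ =
      b τ + ∑ p, g p * (if τ ∈ Set.Icc a (a + t p) then (1 : ℝ) else 0))
    (N : (Q → ℝ) → ℝ) (hN : ∀ g, N g = T.sup' hT (fun τ => drive g τ))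
    (obj : (Q → ℝ) → ℝ) (hobj : ∀ g, obj g = ζev * N g + ∑ p, C p * g p)
    (htq : t zero ≤ t q) :
    obj f - obj f' ≤ lam * (C zero - C q) ∧ obj f ≤ obj f' := by
  classical
  have hdiff : ∀ p, f' p - f p =
      (if zero = p then -lam else 0) + (if q = p then lam else 0) := by
    intro p
    by_cases h0 : p = zero
    · subst h0; simp [hf'0, hq]
    · by_cases hq' : p = q
      · subst hq'; simp [hf'q, Ne.symm h0, hq]
      · simp [hf'p p h0 hq', Ne.symm h0, Ne.symm hq']
  have hsum : ∑ p, C p * f' p - ∑ p, C p * f p = lam * (C q - C zero) := by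
    rw [← Finset.sum_sub_distrib]
    have key : ∀ p ∈ Finset.univ, C p * f' p - C p * f p =
        (if zero = p then -(C zero * lam) else 0) + (if q = p then C q * lam else 0) := by
      intro p _
      have h := hdiff p
      rw [← mul_sub, h]
      by_cases h0 : p = zero
      · subst h0; simp [hq]
      · by_cases hq' : p = q
        · subst hq'; simp [Ne.symm h0]
        · simp [Ne.symm h0, Ne.symm hq']
    rw [Finset.sum_congr rfl key, Finset.sum_add_distrib, Finset.sum_ite_eq,
      Finset.sum_ite_eq]
    simp; ring
  have hdr : ∀ τ, drive f τ ≤ drive f' τ := by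
    intro τ
    rw [hdrive, hdrive]
    set ind : Q → ℝ := fun p => if τ ∈ Set.Icc a (a + t p) then (1:ℝ) else 0 with hind
    have hmono : ind zero ≤ ind q := by
      simp only [hind]
      by_cases h : τ ∈ Set.Icc a (a + t zero)
      · have h2 : τ ∈ Set.Icc a (a + t q) := ⟨h.1, h.2.trans (by linarith)⟩
        simp [h, h2]
      · by_cases h' : τ ∈ Set.Icc a (a + t q) <;> simp [h, h']
    have hs : ∑ p, f' p * ind p - ∑ p, f p * ind p = lam * (ind q - ind zero) := by
      rw [← Finset.sum_sub_distrib]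
      have key : ∀ p ∈ Finset.univ, f' p * ind p - f p * ind p =
          (if zero = p then -(lam * ind zero) else 0) + (if q = p then lam * ind q else 0) := by
        intro p _
        have h := hdiff p
        rw [← sub_mul, h]
        by_cases h0 : p = zero
        · subst h0; simp [hq]
        · by_cases hq' : p = q
          · subst hq'; simp [Ne.symm h0]
          · simp [Ne.symm h0, Ne.symm hq']
      rw [Finset.sum_congr rfl key, Finset.sum_add_distrib, Finset.sum_ite_eq,
        Finset.sum_ite_eq]
      simp; ring
    nlinarith [mul_nonneg hlam0 (sub_nonneg.2 hmono)]
  have hNle : N f ≤ N f' := by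
    rw [hN, hN]
    exact Finset.sup'_le _ _ fun τ hτ => le_trans (hdr τ) (Finset.le_sup' _ hτ)
  constructor
  · rw [hobj, hobj]; nlinarith
  · rw [hobj, hobj]
    have := hCmin q
    nlinarith
end

section
/- Proposition 1, case t_q < t_0 (fleet-size bound, no charger costs): let the total cost of a routing plan f be obj f = ζev · N f + Σ_{q ∈ Q} C q · f q. If q ≠ 0, 0 ≤ λ ≤ f 0, and t q < t 0, then the cost reduction achieved by detouring λ vehicles from the min-operation path 0 to path q satisfies obj f − obj f' ≤ λ · (C 0 − C q) + ζev · λ (the saved fleet investment is at most ζev · λ). -/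
/-- Proposition 1, case `t q < t 0` (fleet-size bound, no charger costs):
detouring `lam` vehicles from the min-operation path `zero` to a faster path `q`
reduces the total cost by at most `lam * (C 0 - C q) + ζev * lam`. -/
theorem prop1_case_faster
    {Q : Type*} [Fintype Q] [Nonempty Q] (zero : Q)
    (t C : Q → ℝ) (ht : ∀ p, 0 ≤ t p) (hC : ∀ p, 0 ≤ C p) (hCmin : ∀ p, C zero ≤ C p)
    (a : ℝ) (b : ℝ → ℝ) (T : Finset ℝ) (hT : T.Nonempty)
    (ζev : ℝ) (hζ : 0 ≤ ζev)
    (f : Q → ℝ) (hf : ∀ p, 0 ≤ f p)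
    (q : Q) (hq : q ≠ zero) (lam : ℝ) (hlam0 : 0 ≤ lam) (hlam : lam ≤ f zero)
    (f' : Q → ℝ) (hf'0 : f' zero = f zero - lam) (hf'q : f' q = f q + lam)
    (hf'p : ∀ p, p ≠ zero → p ≠ q → f' p = f p)
    (drive : (Q → ℝ) → ℝ → ℝ)
    (hdrive : ∀ g τ, drive g τ =
      b τ + ∑ p, g p * (if τ ∈ Set.Icc a (a + t p) then (1 : ℝ) else 0))
    (N : (Q → ℝ) → ℝ) (hN : ∀ g, N g = T.sup' hT (fun τ => drive g τ))
    (obj : (Q → ℝ) → ℝ) (hobj : ∀ g, obj g = ζev * N g + ∑ p, C p * g p)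
    (htq : t q < t zero) :
    obj f - obj f' ≤ lam * (C zero - C q) + ζev * lam := by
  classical
  have hdiff : ∀ p, f p - f' p =
      (if p = zero then lam else 0) - (if p = q then lam else 0) := by
    intro p
    by_cases h0 : p = zero
    · subst h0; simp [hf'0, Ne.symm hq]
    · by_cases hqq : p = q
      · subst hqq; simp [hf'q, h0]
      · simp [hf'p p h0 hqq, h0, hqq]
  have hsum : ∀ (g : Q → ℝ), ∑ p, g p * (f p - f' p) = g zero * lam - g q * lam := by
    intro g
    have : ∀ p, g p * (f p - f' p) =
        (if p = zero then g p * lam else 0) - (if p = q then g p * lam else 0) := by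
      intro p
      rw [hdiff p]
      split_ifs <;> ring
    simp only [this, Finset.sum_sub_distrib, Finset.sum_ite_eq', Finset.mem_univ, if_true]
  -- cost sum difference
  have hcost : (∑ p, C p * f p) - (∑ p, C p * f' p) = lam * (C zero - C q) := by
    rw [← Finset.sum_sub_distrib]
    simp only [← mul_sub]
    rw [hsum C]; ring
  -- fleet size bound
  have hNle : N f ≤ N f' + lam := by
    rw [hN f, hN f']
    apply Finset.sup'_le
    intro τ hτ
    have hdd : drive f τ - drive f' τ ≤ lam := by
      rw [hdrive f τ, hdrive f' τ]
      have : (b τ + ∑ p, f p * (if τ ∈ Set.Icc a (a + t p) then (1:ℝ) else 0))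
          - (b τ + ∑ p, f' p * (if τ ∈ Set.Icc a (a + t p) then (1:ℝ) else 0))
          = ∑ p, (if τ ∈ Set.Icc a (a + t p) then (1:ℝ) else 0) * (f p - f' p) := by
        rw [add_sub_add_left_eq_sub, ← Finset.sum_sub_distrib]
        exact Finset.sum_congr rfl (fun p _ => by ring)
      rw [this, hsum (fun p => if τ ∈ Set.Icc a (a + t p) then (1:ℝ) else 0)]
      have h1 : (if τ ∈ Set.Icc a (a + t zero) then (1:ℝ) else 0) ≤ 1 := by
        split <;> norm_num
      have h2 : 0 ≤ (if τ ∈ Set.Icc a (a + t q) then (1:ℝ) else 0) := by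
        split <;> norm_num
      nlinarith
    have := Finset.le_sup' (fun τ => drive f' τ) hτ
    linarith
  rw [hobj f, hobj f']
  have : ζev * N f - ζev * N f' ≤ ζev * lam := by
    rw [← mul_sub]
    exact (mul_le_mul_of_nonneg_left (by linarith) hζ)
  linarith [hcost]
end

section
/- Proposition 2 (charging-system bound, no fleet costs): let the total cost of a routing plan f be obj f = K f + Σ_{q ∈ Q} C q · f q. If q ≠ 0 and 0 ≤ λ ≤ f 0, then the cost reduction achieved by detouring λ vehicles from the min-operation path 0 to path q satisfies obj f − obj f' ≤ λ · (C 0 − C q) + κ · λ · Σ_{e ∈ Aq 0 \ Aq q} w e; that is, only the charger capacity associated with arcs of path 0 that the detoured vehicles no longer visit can be saved. -/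
/-- Proposition 2 (charging-system bound, no fleet costs):
detouring `lam` vehicles from the min-operation path `zero` to path `q`
reduces the total cost `obj f = K f + Σ C p * f p` by at most
`lam * (C 0 - C q) + κ * lam * Σ_{e ∈ Aq 0 \ Aq q} w e`. -/
theorem prop2_charging_bound
    {Q : Type*} [Fintype Q] [Nonempty Q] (zero : Q)
    (t C : Q → ℝ) (ht : ∀ p, 0 ≤ t p) (hC : ∀ p, 0 ≤ C p) (hCmin : ∀ p, C zero ≤ C p)
    (f : Q → ℝ) (hf : ∀ p, 0 ≤ f p)
    (q : Q) (hq : q ≠ zero) (lam : ℝ) (hlam0 : 0 ≤ lam) (hlam : lam ≤ f zero)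
    (f' : Q → ℝ) (hf'0 : f' zero = f zero - lam) (hf'q : f' q = f q + lam)
    (hf'p : ∀ p, p ≠ zero → p ≠ q → f' p = f p)
    {A : Type*} [Fintype A] [DecidableEq A]
    (w : A → ℝ) (hw : ∀ e, 0 ≤ w e) (Aq : Q → Finset A)
    (κ : ℝ) (hκ : 0 ≤ κ)
    (K : (Q → ℝ) → ℝ)
    (hK : ∀ g, K g = κ * ∑ e, w e * (∑ p, if e ∈ Aq p then g p else 0))
    (obj : (Q → ℝ) → ℝ) (hobj : ∀ g, obj g = K g + ∑ p, C p * g p) :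
    obj f - obj f' ≤ lam * (C zero - C q) + κ * lam * ∑ e ∈ Aq zero \ Aq q, w e := by
  classical
  have hdiff : ∀ p, f p - f' p =
      (if p = zero then lam else 0) - (if p = q then lam else 0) := by
    intro p
    by_cases h0 : p = zero
    · subst h0
      rw [hf'0]
      simp [Ne.symm hq]
    · by_cases h1 : p = q
      · subst h1
        rw [hf'q]
        simp [h0]
      · rw [hf'p p h0 h1]
        simp [h0, h1]
  have hsumC : (∑ p, C p * f p) - ∑ p, C p * f' p = lam * C zero - lam * C q := by
    rw [← Finset.sum_sub_distrib]
    have h : ∀ p ∈ Finset.univ, C p * f p - C p * f' p =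
        (if p = zero then lam * C zero else 0) - (if p = q then lam * C q else 0) := by
      intro p _
      rw [← mul_sub, hdiff p]
      by_cases h0 : p = zero <;> by_cases h1 : p = q <;> subst_eqs <;> simp_all <;> ring
    rw [Finset.sum_congr rfl h, Finset.sum_sub_distrib]
    simp
  have hinner : ∀ e : A, (∑ p, if e ∈ Aq p then f p else 0) -
      (∑ p, if e ∈ Aq p then f' p else 0) =
      (if e ∈ Aq zero then lam else 0) - (if e ∈ Aq q then lam else 0) := by
    intro e
    rw [← Finset.sum_sub_distrib]
    have h : ∀ p ∈ Finset.univ, (if e ∈ Aq p then f p else 0) - (if e ∈ Aq p then f' p else 0) =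
        (if p = zero then (if e ∈ Aq zero then lam else 0) else 0) -
        (if p = q then (if e ∈ Aq q then lam else 0) else 0) := by
      intro p _
      by_cases hm : e ∈ Aq p
      · rw [if_pos hm, if_pos hm, hdiff p]
        by_cases h0 : p = zero <;> by_cases h1 : p = q <;> subst_eqs <;> simp_all
      · rw [if_neg hm, if_neg hm]
        by_cases h0 : p = zero <;> by_cases h1 : p = q <;> subst_eqs <;> simp_all
    rw [Finset.sum_congr rfl h, Finset.sum_sub_distrib]
    simp
  have hKdiff : K f - K f' = κ * ∑ e, w e *
      ((if e ∈ Aq zero then lam else 0) - (if e ∈ Aq q then lam else 0)) := by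
    rw [hK, hK, ← mul_sub, ← Finset.sum_sub_distrib]
    congr 1
    refine Finset.sum_congr rfl fun e _ => ?_
    rw [← mul_sub, hinner e]
  have hbound : (∑ e, w e *
      ((if e ∈ Aq zero then lam else 0) - (if e ∈ Aq q then lam else 0))) ≤
      lam * ∑ e ∈ Aq zero \ Aq q, w e := by
    have hrw : lam * ∑ e ∈ Aq zero \ Aq q, w e =
        ∑ e : A, if e ∈ Aq zero \ Aq q then lam * w e else 0 := by
      rw [Finset.sum_ite_mem, Finset.univ_inter, Finset.mul_sum]
    rw [hrw]
    refine Finset.sum_le_sum fun e _ => ?_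
    by_cases h0 : e ∈ Aq zero <;> by_cases h1 : e ∈ Aq q <;>
      simp [h0, h1, Finset.mem_sdiff] <;> nlinarith [hw e, hlam0]
  have hsplit : obj f - obj f' = (K f - K f') + ((∑ p, C p * f p) - ∑ p, C p * f' p) := by
    rw [hobj, hobj]; ring
  rw [hsplit, hKdiff, hsumC]
  have := mul_le_mul_of_nonneg_left hbound hκ
  nlinarith
end

section
/- Proposition 3, case t_q ≥ t_0 (joint fleet and charging-system bound): let the total cost of a routing plan f be obj f = ζev · N f + K f + Σ_{q ∈ Q} C q · f q. If q ≠ 0, 0 ≤ λ ≤ f 0, and t q ≥ t 0, then the cost reduction achieved by detouring λ vehicles from the min-operation path 0 to path q satisfies obj f − obj f' ≤ λ · (C 0 − C q) + d, where d = κ · λ · Σ_{e ∈ Aq 0 \ Aq q} w e. -/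
/-- Proposition 3, case `t q ≥ t 0` (joint fleet and charging-system bound):
detouring `lam` vehicles from the min-operation path `zero` to a slower path `q`
reduces the total cost `obj f = ζev * N f + K f + Σ C p * f p` by at most
`lam * (C 0 - C q) + d` where `d = κ * lam * Σ_{e ∈ Aq 0 \ Aq q} w e`. -/
theorem prop3_case_slower
    {Q : Type*} [Fintype Q] [Nonempty Q] (zero : Q)
    (t C : Q → ℝ) (ht : ∀ p, 0 ≤ t p) (hC : ∀ p, 0 ≤ C p) (hCmin : ∀ p, C zero ≤ C p)
    (a : ℝ) (b : ℝ → ℝ) (T : Finset ℝ) (hT : T.Nonempty)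
    (ζev : ℝ) (hζ : 0 ≤ ζev)
    (f : Q → ℝ) (hf : ∀ p, 0 ≤ f p)
    (q : Q) (hq : q ≠ zero) (lam : ℝ) (hlam0 : 0 ≤ lam) (hlam : lam ≤ f zero)
    (f' : Q → ℝ) (hf'0 : f' zero = f zero - lam) (hf'q : f' q = f q + lam)
    (hf'p : ∀ p, p ≠ zero → p ≠ q → f' p = f p)
    (drive : (Q → ℝ) → ℝ → ℝ)
    (hdrive : ∀ g τ, drive g τ =
      b τ + ∑ p, g p * (if τ ∈ Set.Icc a (a + t p) then (1 : ℝ) else 0))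
    (N : (Q → ℝ) → ℝ) (hN : ∀ g, N g = T.sup' hT (fun τ => drive g τ))
    {A : Type*} [Fintype A] [DecidableEq A]
    (w : A → ℝ) (hw : ∀ e, 0 ≤ w e) (Aq : Q → Finset A)
    (κ : ℝ) (hκ : 0 ≤ κ)
    (K : (Q → ℝ) → ℝ)
    (hK : ∀ g, K g = κ * ∑ e, w e * (∑ p, if e ∈ Aq p then g p else 0))
    (obj : (Q → ℝ) → ℝ) (hobj : ∀ g, obj g = ζev * N g + K g + ∑ p, C p * g p)
    (htq : t zero ≤ t q)
    (d : ℝ) (hd : d = κ * lam * ∑ e ∈ Aq zero \ Aq q, w e) :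
    obj f - obj f' ≤ lam * (C zero - C q) + d := by
  classical
  -- key algebraic identity
  have hkey : ∀ X : Q → ℝ,
      (∑ p, f' p * X p) - (∑ p, f p * X p) = lam * X q - lam * X zero := by
    intro X
    have h1 : ∀ p : Q, f' p * X p - f p * X p
        = (if p = q then lam * X p else 0) - (if p = zero then lam * X p else 0) := by
      intro p
      by_cases h0 : p = zero
      · subst h0
        rw [hf'0, if_neg (Ne.symm hq), if_pos rfl]; ring
      · by_cases hq' : p = q
        · subst hq'
          rw [hf'q, if_pos rfl, if_neg hq]; ring
        · rw [hf'p p h0 hq', if_neg hq', if_neg h0]; ring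
    rw [← Finset.sum_sub_distrib]
    simp only [h1]
    rw [Finset.sum_sub_distrib, Finset.sum_ite_eq' Finset.univ q,
      Finset.sum_ite_eq' Finset.univ zero]
    simp
  -- fleet size monotone
  have hdm : ∀ τ, drive f τ ≤ drive f' τ := by
    intro τ
    have hind : (if τ ∈ Set.Icc a (a + t zero) then (1 : ℝ) else 0)
        ≤ (if τ ∈ Set.Icc a (a + t q) then (1 : ℝ) else 0) := by
      by_cases h : τ ∈ Set.Icc a (a + t zero)
      · have h2 : τ ∈ Set.Icc a (a + t q) := ⟨h.1, le_trans h.2 (by linarith)⟩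
        simp [h, h2]
      · by_cases h2 : τ ∈ Set.Icc a (a + t q) <;> simp [h, h2]
    have := hkey (fun p => if τ ∈ Set.Icc a (a + t p) then (1 : ℝ) else 0)
    rw [hdrive, hdrive]
    have hnn : 0 ≤ lam * ((if τ ∈ Set.Icc a (a + t q) then (1 : ℝ) else 0)
        - (if τ ∈ Set.Icc a (a + t zero) then (1 : ℝ) else 0)) := by
      apply mul_nonneg hlam0; linarith
    nlinarith [this]
  have hNle : N f ≤ N f' := by
    rw [hN, hN]
    apply Finset.sup'_le
    intro τ hτ
    exact le_trans (hdm τ) (Finset.le_sup' _ hτ)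
  -- operation cost
  have hCsum : (∑ p, C p * f p) - (∑ p, C p * f' p) = lam * (C zero - C q) := by
    have h := hkey C
    rw [show (∑ p, C p * f p) = ∑ p, f p * C p from
        Finset.sum_congr rfl (fun p _ => mul_comm _ _),
      show (∑ p, C p * f' p) = ∑ p, f' p * C p from
        Finset.sum_congr rfl (fun p _ => mul_comm _ _)]
    linarith
  -- charging cost
  have hKle : K f - K f' ≤ d := by
    rw [hK, hK, hd, ← mul_sub, ← Finset.sum_sub_distrib]
    have hS : ∀ e : A,
        w e * (∑ p, if e ∈ Aq p then f p else 0)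
          - w e * (∑ p, if e ∈ Aq p then f' p else 0)
        ≤ if e ∈ Aq zero \ Aq q then lam * w e else 0 := by
      intro e
      have h := hkey (fun p => if e ∈ Aq p then (1 : ℝ) else 0)
      simp only [mul_ite, mul_one, mul_zero] at h
      rw [← mul_sub]
      have hsum : (∑ p, if e ∈ Aq p then f p else 0)
          - (∑ p, if e ∈ Aq p then f' p else 0)
          = (if e ∈ Aq zero then lam else 0)
            - (if e ∈ Aq q then lam else 0) := by linarith
      rw [hsum]
      by_cases h0 : e ∈ Aq zero <;> by_cases hqq : e ∈ Aq q <;>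
        simp [h0, hqq, Finset.mem_sdiff] <;> nlinarith [hw e, hlam0]
    calc κ * ∑ e, (w e * (∑ p, if e ∈ Aq p then f p else 0)
          - w e * (∑ p, if e ∈ Aq p then f' p else 0))
        ≤ κ * ∑ e, (if e ∈ Aq zero \ Aq q then lam * w e else 0) := by
          apply mul_le_mul_of_nonneg_left _ hκ
          exact Finset.sum_le_sum (fun e _ => hS e)
      _ = κ * lam * ∑ e ∈ Aq zero \ Aq q, w e := by
          rw [Finset.sum_ite_mem, Finset.univ_inter, Finset.mul_sum, Finset.mul_sum]
          exact Finset.sum_congr rfl (fun e _ => by ring)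
  have hNdiff : ζev * N f - ζev * N f' ≤ 0 := by
    rw [← mul_sub]
    exact mul_nonpos_of_nonneg_of_nonpos hζ (by linarith)
  rw [hobj, hobj]
  linarith
end

section
/- Proposition 3, case t_q < t_0 (joint fleet and charging-system bound): let the total cost of a routing plan f be obj f = ζev · N f + K f + Σ_{q ∈ Q} C q · f q. If q ≠ 0, 0 ≤ λ ≤ f 0, and t q < t 0, then the cost reduction achieved by detouring λ vehicles from the min-operation path 0 to path q satisfies obj f − obj f' ≤ λ · (C 0 − C q) + ζev · λ + d, where d = κ · λ · Σ_{e ∈ Aq 0 \ Aq q} w e. -/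
/-- Proposition 3, case `t q < t 0` (joint fleet and charging-system bound):
detouring `lam` vehicles from the min-operation path `zero` to a faster path `q`
reduces the total cost `obj f = ζev * N f + K f + Σ C p * f p` by at most
`lam * (C 0 - C q) + ζev * lam + d` where `d = κ * lam * Σ_{e ∈ Aq 0 \ Aq q} w e`. -/
theorem prop3_case_faster
    {Q : Type*} [Fintype Q] [Nonempty Q] (zero : Q)
    (t C : Q → ℝ) (ht : ∀ p, 0 ≤ t p) (hC : ∀ p, 0 ≤ C p) (hCmin : ∀ p, C zero ≤ C p)
    (a : ℝ) (b : ℝ → ℝ) (T : Finset ℝ) (hT : T.Nonempty)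
    (ζev : ℝ) (hζ : 0 ≤ ζev)
    (f : Q → ℝ) (hf : ∀ p, 0 ≤ f p)
    (q : Q) (hq : q ≠ zero) (lam : ℝ) (hlam0 : 0 ≤ lam) (hlam : lam ≤ f zero)
    (f' : Q → ℝ) (hf'0 : f' zero = f zero - lam) (hf'q : f' q = f q + lam)
    (hf'p : ∀ p, p ≠ zero → p ≠ q → f' p = f p)
    (drive : (Q → ℝ) → ℝ → ℝ)
    (hdrive : ∀ g τ, drive g τ =
      b τ + ∑ p, g p * (if τ ∈ Set.Icc a (a + t p) then (1 : ℝ) else 0))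
    (N : (Q → ℝ) → ℝ) (hN : ∀ g, N g = T.sup' hT (fun τ => drive g τ))
    {A : Type*} [Fintype A] [DecidableEq A]
    (w : A → ℝ) (hw : ∀ e, 0 ≤ w e) (Aq : Q → Finset A)
    (κ : ℝ) (hκ : 0 ≤ κ)
    (K : (Q → ℝ) → ℝ)
    (hK : ∀ g, K g = κ * ∑ e, w e * (∑ p, if e ∈ Aq p then g p else 0))
    (obj : (Q → ℝ) → ℝ) (hobj : ∀ g, obj g = ζev * N g + K g + ∑ p, C p * g p)
    (htq : t q < t zero)
    (d : ℝ) (hd : d = κ * lam * ∑ e ∈ Aq zero \ Aq q, w e) :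
    obj f - obj f' ≤ lam * (C zero - C q) + ζev * lam + d := by
  -- key difference lemma
  have split : ∀ g : Q → ℝ,
      (∑ p, f p * g p) - (∑ p, f' p * g p) = lam * g zero - lam * g q := by
    intro g
    have hdiff : ∑ p, (f p - f' p) * g p = lam * g zero - lam * g q := by
      have h := Fintype.sum_eq_add zero q (Ne.symm hq)
        (f := fun p => (f p - f' p) * g p)
        (by rintro c ⟨hc1, hc2⟩; rw [hf'p c hc1 hc2]; ring)
      rw [h]; simp only [hf'0, hf'q]; ring
    have h1 : ∑ p, (f p - f' p) * g p = ∑ p, (f p * g p - f' p * g p) :=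
      Finset.sum_congr rfl (fun p _ => by ring)
    rw [Finset.sum_sub_distrib] at h1
    rw [← h1, hdiff]
  -- operation cost difference
  have hop : (∑ p, C p * f p) - (∑ p, C p * f' p) = lam * (C zero - C q) := by
    have e1 : ∑ p, C p * f p = ∑ p, f p * C p :=
      Finset.sum_congr rfl (fun p _ => mul_comm _ _)
    have e2 : ∑ p, C p * f' p = ∑ p, f' p * C p :=
      Finset.sum_congr rfl (fun p _ => mul_comm _ _)
    rw [e1, e2, split C]; ring
  -- fleet difference
  have hNle : N f ≤ N f' + lam := by
    rw [hN, hN]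
    apply Finset.sup'_le
    intro τ hτ
    have h1 : drive f τ ≤ drive f' τ + lam := by
      rw [hdrive, hdrive]
      have hs := split (fun p => if τ ∈ Set.Icc a (a + t p) then (1:ℝ) else 0)
      have hb0 : (if τ ∈ Set.Icc a (a + t zero) then (1:ℝ) else 0) ≤ 1 := by
        split <;> norm_num
      have hbq : (0:ℝ) ≤ (if τ ∈ Set.Icc a (a + t q) then (1:ℝ) else 0) := by
        split <;> norm_num
      nlinarith [hs, hb0, hbq, hlam0]
    exact h1.trans (by
      have := Finset.le_sup' (fun τ => drive f' τ) hτ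
      linarith)
  -- charging cost difference
  have hKle : K f - K f' ≤ d := by
    rw [hK, hK, hd, ← mul_sub, ← Finset.sum_sub_distrib]
    have h1 : ∀ e : A, (w e * (∑ p, if e ∈ Aq p then f p else 0)
          - w e * (∑ p, if e ∈ Aq p then f' p else 0))
        = w e * (lam * (if e ∈ Aq zero then (1:ℝ) else 0)
          - lam * (if e ∈ Aq q then (1:ℝ) else 0)) := by
      intro e
      have hs := split (fun p => if e ∈ Aq p then (1:ℝ) else 0)
      have e1 : ∑ p, (if e ∈ Aq p then f p else 0)
          = ∑ p, f p * (if e ∈ Aq p then (1:ℝ) else 0) :=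
        Finset.sum_congr rfl (fun p _ => by split <;> ring)
      have e2 : ∑ p, (if e ∈ Aq p then f' p else 0)
          = ∑ p, f' p * (if e ∈ Aq p then (1:ℝ) else 0) :=
        Finset.sum_congr rfl (fun p _ => by split <;> ring)
      rw [e1, e2, ← mul_sub, hs]
    have hsum : ∑ e, (w e * (∑ p, if e ∈ Aq p then f p else 0)
            - w e * (∑ p, if e ∈ Aq p then f' p else 0))
        ≤ ∑ e ∈ Aq zero \ Aq q, lam * w e := by
      rw [← Finset.sum_filter_add_sum_filter_not Finset.univ
        (fun e => e ∈ Aq zero \ Aq q)]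
      have step1 : (∑ e ∈ Finset.univ.filter (fun e => e ∈ Aq zero \ Aq q),
              (w e * (∑ p, if e ∈ Aq p then f p else 0)
                - w e * (∑ p, if e ∈ Aq p then f' p else 0)))
          ≤ ∑ e ∈ Aq zero \ Aq q, lam * w e := by
        have hset : Finset.univ.filter (fun e => e ∈ Aq zero \ Aq q) = Aq zero \ Aq q := by
          ext e; simp
        rw [hset]
        apply Finset.sum_le_sum
        intro e he
        rw [h1 e]
        rw [Finset.mem_sdiff] at he
        rw [if_pos he.1, if_neg he.2]
        exact le_of_eq (by ring)
      have step2 : (∑ e ∈ Finset.univ.filter (fun e => ¬ e ∈ Aq zero \ Aq q),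
              (w e * (∑ p, if e ∈ Aq p then f p else 0)
                - w e * (∑ p, if e ∈ Aq p then f' p else 0))) ≤ 0 := by
        apply Finset.sum_nonpos
        intro e he
        rw [h1 e]
        simp only [Finset.mem_filter, Finset.mem_sdiff, not_and, not_not] at he
        by_cases h0 : e ∈ Aq zero
        · have hqe : e ∈ Aq q := he.2 h0
          rw [if_pos h0, if_pos hqe]
          exact le_of_eq (by ring)
        · rw [if_neg h0]
          have hχ : (0:ℝ) ≤ if e ∈ Aq q then (1:ℝ) else 0 := by split <;> norm_num
          nlinarith [mul_nonneg (mul_nonneg (hw e) hlam0) hχ]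
      linarith
    calc κ * ∑ e, (w e * (∑ p, if e ∈ Aq p then f p else 0)
            - w e * (∑ p, if e ∈ Aq p then f' p else 0))
        ≤ κ * ∑ e ∈ Aq zero \ Aq q, lam * w e :=
          mul_le_mul_of_nonneg_left hsum hκ
      _ = κ * lam * ∑ e ∈ Aq zero \ Aq q, w e := by
          rw [Finset.mul_sum, Finset.mul_sum]
          exact Finset.sum_congr rfl (fun e _ => by ring)
  -- combine
  rw [hobj, hobj]
  have hNζ : ζev * N f ≤ ζev * N f' + ζev * lam := by
    have := mul_le_mul_of_nonneg_left hNle hζ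
    nlinarith [this]
  linarith [hop, hKle, hNζ]
end

section
/- Validity of the path-elimination cuts (justification of Remarks 1–3): let the total cost of a routing plan f be obj f = ζev · N f + K f + Σ_{q ∈ Q} C q · f q, let q ≠ 0 and 0 ≤ λ ≤ f q, and let f'' be the plan obtained from f by rerouting λ vehicles from path q back to the min-operation path 0 (f'' 0 = f 0 + λ, f'' q = f q − λ, f'' p = f p for p ≠ 0, q). Then obj f'' − obj f ≤ ΔC, where ΔC = λ · (C 0 − C q) + κ · λ · Σ_{e ∈ Aq 0 \ Aq q} w e + (if t q < t 0 then ζev · λ else 0). In particular, if ΔC ≤ 0 then obj f'' ≤ obj f, so any plan using path q can be replaced by one avoiding it at no greater cost; hence paths with ΔC ≤ 0 can be eliminated without loss of optimality. -/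
/-- Validity of the path-elimination cuts (Remarks 1–3): rerouting `lam` vehicles from a
path `q` back to the min-operation path `zero` increases the total cost
`obj f = ζev * N f + K f + Σ C p * f p` by at most
`ΔC = lam*(C 0 - C q) + κ*lam*Σ_{e ∈ Aq 0 \ Aq q} w e + (if t q < t 0 then ζev*lam else 0)`;
in particular, if `ΔC ≤ 0` then `obj f'' ≤ obj f`, so paths with `ΔC ≤ 0` can be
eliminated without loss of optimality. -/
theorem cuts_validity
    {Q : Type*} [Fintype Q] [Nonempty Q] (zero : Q)
    (t C : Q → ℝ) (ht : ∀ p, 0 ≤ t p) (hC : ∀ p, 0 ≤ C p) (hCmin : ∀ p, C zero ≤ C p)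
    (a : ℝ) (b : ℝ → ℝ) (T : Finset ℝ) (hT : T.Nonempty)
    (ζev : ℝ) (hζ : 0 ≤ ζev)
    (f : Q → ℝ) (hf : ∀ p, 0 ≤ f p)
    (q : Q) (hq : q ≠ zero) (lam : ℝ) (hlam0 : 0 ≤ lam) (hlam : lam ≤ f q)
    (f'' : Q → ℝ) (hf''0 : f'' zero = f zero + lam) (hf''q : f'' q = f q - lam)
    (hf''p : ∀ p, p ≠ zero → p ≠ q → f'' p = f p)
    (drive : (Q → ℝ) → ℝ → ℝ)
    (hdrive : ∀ g τ, drive g τ =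
      b τ + ∑ p, g p * (if τ ∈ Set.Icc a (a + t p) then (1 : ℝ) else 0))
    (N : (Q → ℝ) → ℝ) (hN : ∀ g, N g = T.sup' hT (fun τ => drive g τ))
    {A : Type*} [Fintype A] [DecidableEq A]
    (w : A → ℝ) (hw : ∀ e, 0 ≤ w e) (Aq : Q → Finset A)
    (κ : ℝ) (hκ : 0 ≤ κ)
    (K : (Q → ℝ) → ℝ)
    (hK : ∀ g, K g = κ * ∑ e, w e * (∑ p, if e ∈ Aq p then g p else 0))
    (obj : (Q → ℝ) → ℝ) (hobj : ∀ g, obj g = ζev * N g + K g + ∑ p, C p * g p)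
    (ΔC : ℝ)
    (hΔC : ΔC = lam * (C zero - C q) + κ * lam * (∑ e ∈ Aq zero \ Aq q, w e)
      + (if t q < t zero then ζev * lam else 0)) :
    obj f'' - obj f ≤ ΔC ∧ (ΔC ≤ 0 → obj f'' ≤ obj f) := by
  classical
  have hdiff : ∀ p, f'' p = f p + ((if p = zero then lam else 0) - (if p = q then lam else 0)) := by
    intro p
    by_cases h0 : p = zero
    · subst h0; simp [hf''0, Ne.symm hq]
    · by_cases hqq : p = q
      · subst hqq; simp [hf''q, h0]; ring
      · simp [hf''p p h0 hqq, h0, hqq]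
  -- operation cost difference
  have hcost : (∑ p, C p * f'' p) - (∑ p, C p * f p) = lam * (C zero - C q) := by
    have h : ∀ p, C p * f'' p = C p * f p
        + ((if p = zero then C zero * lam else 0) - (if p = q then C q * lam else 0)) := by
      intro p
      by_cases h0 : p = zero
      · subst h0; rw [hdiff]; simp [Ne.symm hq]; ring
      · by_cases hqq : p = q
        · subst hqq; rw [hdiff]; simp [h0]; ring
        · rw [hdiff]; simp [h0, hqq]
    simp only [h]
    rw [Finset.sum_add_distrib, Finset.sum_sub_distrib]
    simp [Finset.sum_ite_eq']
    ring
  -- charger cost difference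
  have hinner : ∀ e, (∑ p, if e ∈ Aq p then f'' p else 0)
      = (∑ p, if e ∈ Aq p then f p else 0)
        + ((if e ∈ Aq zero then lam else 0) - (if e ∈ Aq q then lam else 0)) := by
    intro e
    have h : ∀ p, (if e ∈ Aq p then f'' p else 0)
        = (if e ∈ Aq p then f p else 0)
          + ((if p = zero then (if e ∈ Aq zero then lam else 0) else 0)
            - (if p = q then (if e ∈ Aq q then lam else 0) else 0)) := by
      intro p
      rw [hdiff p]
      rcases eq_or_ne p zero with h0 | h0
      · have hpq : p ≠ q := fun h => hq (h ▸ h0)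
        rw [if_pos h0, if_neg hpq, if_pos h0, if_neg hpq, h0]
        split_ifs <;> ring
      · rcases eq_or_ne p q with hqq | hqq
        · rw [if_neg h0, if_pos hqq, if_neg h0, if_pos hqq, hqq]
          split_ifs <;> ring
        · rw [if_neg h0, if_neg hqq, if_neg h0, if_neg hqq]
          split_ifs <;> ring
    simp only [h]
    rw [Finset.sum_add_distrib, Finset.sum_sub_distrib]
    simp [Finset.sum_ite_eq']
  have hKdiff : K f'' - K f ≤ κ * lam * (∑ e ∈ Aq zero \ Aq q, w e) := by
    have h1 : K f'' - K f
        = κ * lam * ((∑ e ∈ Aq zero, w e) - (∑ e ∈ Aq q, w e)) := by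
      rw [hK, hK, ← mul_sub, ← Finset.sum_sub_distrib]
      have h2 : ∀ e : A, w e * (∑ p, if e ∈ Aq p then f'' p else 0)
          - w e * (∑ p, if e ∈ Aq p then f p else 0)
          = (if e ∈ Aq zero then w e * lam else 0)
            - (if e ∈ Aq q then w e * lam else 0) := by
        intro e; rw [hinner e]; split_ifs <;> ring
      simp only [h2]
      rw [Finset.sum_sub_distrib]
      rw [Finset.sum_ite_mem, Finset.sum_ite_mem, Finset.univ_inter, Finset.univ_inter]
      rw [← Finset.sum_mul, ← Finset.sum_mul]
      ring
    have h3 : (∑ e ∈ Aq zero ∩ Aq q, w e) + (∑ e ∈ Aq zero \ Aq q, w e)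
        = ∑ e ∈ Aq zero, w e := Finset.sum_inter_add_sum_sdiff _ _ _
    have h4 : (∑ e ∈ Aq zero ∩ Aq q, w e) ≤ ∑ e ∈ Aq q, w e :=
      Finset.sum_le_sum_of_subset_of_nonneg Finset.inter_subset_right (fun i _ _ => hw i)
    have h5 : (∑ e ∈ Aq zero, w e) - (∑ e ∈ Aq q, w e) ≤ ∑ e ∈ Aq zero \ Aq q, w e := by
      linarith
    rw [h1]
    exact mul_le_mul_of_nonneg_left h5 (mul_nonneg hκ hlam0)
  -- fleet size difference
  have hNd : ∀ τ, drive f'' τ ≤ drive f τ + (if t q < t zero then lam else 0) := by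
    intro τ
    rw [hdrive, hdrive]
    have hsum : ∀ p, f'' p * (if τ ∈ Set.Icc a (a + t p) then (1:ℝ) else 0)
        = f p * (if τ ∈ Set.Icc a (a + t p) then (1:ℝ) else 0)
          + ((if p = zero then lam * (if τ ∈ Set.Icc a (a + t zero) then (1:ℝ) else 0) else 0)
            - (if p = q then lam * (if τ ∈ Set.Icc a (a + t q) then (1:ℝ) else 0) else 0)) := by
      intro p
      rw [hdiff p]
      rcases eq_or_ne p zero with h0 | h0
      · have hpq : p ≠ q := fun h => hq (h ▸ h0)
        rw [if_pos h0, if_neg hpq, if_pos h0, if_neg hpq, h0]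
        split_ifs <;> ring
      · rcases eq_or_ne p q with hqq | hqq
        · rw [if_neg h0, if_pos hqq, if_neg h0, if_pos hqq, hqq]
          split_ifs <;> ring
        · rw [if_neg h0, if_neg hqq, if_neg h0, if_neg hqq]
          split_ifs <;> ring
    simp only [hsum]
    rw [Finset.sum_add_distrib, Finset.sum_sub_distrib]
    simp only [Finset.sum_ite_eq', Finset.mem_univ, if_true]
    have hrest : lam * (if τ ∈ Set.Icc a (a + t zero) then (1:ℝ) else 0)
        - lam * (if τ ∈ Set.Icc a (a + t q) then (1:ℝ) else 0)
        ≤ (if t q < t zero then lam else 0) := by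
      by_cases hcase : t q < t zero
      · simp only [if_pos hcase]
        have h1 : (if τ ∈ Set.Icc a (a + t zero) then (1:ℝ) else 0) ≤ 1 := by
          split <;> norm_num
        have h2 : (0:ℝ) ≤ (if τ ∈ Set.Icc a (a + t q) then (1:ℝ) else 0) := by
          split <;> norm_num
        nlinarith
      · simp only [if_neg hcase]
        push_neg at hcase
        have hle : (if τ ∈ Set.Icc a (a + t zero) then (1:ℝ) else 0)
            ≤ (if τ ∈ Set.Icc a (a + t q) then (1:ℝ) else 0) := by
          by_cases hm : τ ∈ Set.Icc a (a + t zero)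
          · have hm' : τ ∈ Set.Icc a (a + t q) := ⟨hm.1, hm.2.trans (by linarith)⟩
            simp [hm, hm']
          · simp only [if_neg hm]
            split <;> norm_num
        nlinarith
    linarith
  have hNle : N f'' ≤ N f + (if t q < t zero then lam else 0) := by
    rw [hN f'', hN f]
    apply Finset.sup'_le
    intro τ hτ
    calc drive f'' τ ≤ drive f τ + (if t q < t zero then lam else 0) := hNd τ
      _ ≤ T.sup' hT (fun τ => drive f τ) + (if t q < t zero then lam else 0) := by
          gcongr
          exact Finset.le_sup' _ hτ
  have hζN : ζev * N f'' - ζev * N f ≤ (if t q < t zero then ζev * lam else 0) := by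
    have h6 := mul_le_mul_of_nonneg_left hNle hζ
    split_ifs at h6 ⊢ <;> nlinarith
  have hmain : obj f'' - obj f ≤ ΔC := by
    rw [hobj, hobj, hΔC]
    linarith
  exact ⟨hmain, fun h => by linarith⟩
end

section
/- Fleet-size monotonicity under detouring to a slower path (step of the proof of Proposition 1, case 1): if q ≠ 0, 0 ≤ λ ≤ f 0, and t q ≥ t 0, then for every time τ one has drive f' τ ≥ drive f τ, and consequently the required fleet size does not decrease: N f' ≥ N f. -/
/-- Fleet-size monotonicity under detouring to a slower path (Proposition 1, case 1 step):
if `t q ≥ t 0`, then at every time `τ` the busy-vehicle count of the detoured plan `f'`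
is at least that of `f`, and consequently `N f' ≥ N f`. -/
theorem fleet_monotone_slower_detour
    {Q : Type*} [Fintype Q] [Nonempty Q] (zero : Q)
    (t : Q → ℝ) (ht : ∀ p, 0 ≤ t p)
    (a : ℝ) (b : ℝ → ℝ) (T : Finset ℝ) (hT : T.Nonempty)
    (f : Q → ℝ) (hf : ∀ p, 0 ≤ f p)
    (q : Q) (hq : q ≠ zero) (lam : ℝ) (hlam0 : 0 ≤ lam) (hlam : lam ≤ f zero)
    (f' : Q → ℝ) (hf'0 : f' zero = f zero - lam) (hf'q : f' q = f q + lam)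
    (hf'p : ∀ p, p ≠ zero → p ≠ q → f' p = f p)
    (drive : (Q → ℝ) → ℝ → ℝ)
    (hdrive : ∀ g τ, drive g τ =
      b τ + ∑ p, g p * (if τ ∈ Set.Icc a (a + t p) then (1 : ℝ) else 0))
    (N : (Q → ℝ) → ℝ) (hN : ∀ g, N g = T.sup' hT (fun τ => drive g τ))
    (htq : t zero ≤ t q) :
    (∀ τ : ℝ, drive f τ ≤ drive f' τ) ∧ N f ≤ N f' := by
  classical
  have key : ∀ τ : ℝ, drive f τ ≤ drive f' τ := by
    intro τ
    rw [hdrive, hdrive]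
    set i : Q → ℝ := fun p => if τ ∈ Set.Icc a (a + t p) then (1 : ℝ) else 0 with hi
    have hdiff : ∀ p, f' p = f p + ((if p = q then lam else 0) + (if p = zero then -lam else 0)) := by
      intro p
      by_cases h1 : p = zero
      · subst h1; simp [hf'0, hq.symm]; ring
      · by_cases h2 : p = q
        · subst h2; simp [hf'q, h1]
        · simp [hf'p p h1 h2, h1, h2]
    have hsum : ∑ p, f' p * i p = (∑ p, f p * i p) + (lam * i q - lam * i zero) := by
      have : ∀ p, f' p * i p = f p * i p + ((if p = q then lam else 0) * i p + (if p = zero then -lam else 0) * i p) := by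
        intro p; rw [hdiff p]; ring
      rw [Finset.sum_congr rfl (fun p _ => this p), Finset.sum_add_distrib,
        Finset.sum_add_distrib]
      have h1 : ∑ p, (if p = q then lam else 0) * i p = lam * i q := by
        rw [Finset.sum_eq_single q]
        · simp
        · intro p _ hp; simp [hp]
        · simp
      have h2 : ∑ p, (if p = zero then -lam else 0) * i p = -lam * i zero := by
        rw [Finset.sum_eq_single zero]
        · simp
        · intro p _ hp; simp [hp]
        · simp
      rw [h1, h2]; ring
    rw [hsum]
    have hiz : i zero ≤ i q := by
      simp only [hi]
      by_cases h : τ ∈ Set.Icc a (a + t zero)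
      · have : τ ∈ Set.Icc a (a + t q) := ⟨h.1, h.2.trans (by linarith)⟩
        simp [h, this]
      · simp [h]; positivity
    nlinarith
  refine ⟨key, ?_⟩
  rw [hN, hN]
  exact Finset.sup'_mono_fun (fun τ _ => key τ)
end
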